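/- In U(gl(2|1))[[t]]: [T, E₂] = (t/2)(T² + 1)E₃, [T', E₂] = −(t/2)(T'² + 1)E₃, [T, F₃] = −(t/2)(T² + 1)F₂, [T', F₃] = (t/2)(T'² + 1)F₂, and 2t·{F₂, E₃} = T − T' (equivalently {F₂, E₃} = (1/(2t))(T − T'); note T − T' = 2t e₁ so both sides are divisible by t). -/

import Mathlib

noncomputable section

namespace SuperJordanian

open scoped BigOperators

/-- The generalized binomial coefficient `C(1/2, n)`. -/
def cHalf (n : ℕ) : ℂ :=
  (∏ i ∈ Finset.range n, ((1 : ℂ) / 2 - (i : ℂ))) / (n.factorial : ℂ)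

/-- Parity for `gl(2|1)`: `p(i,j) = 1` iff exactly one of `i`, `j` equals the third index. -/
def par (i j : Fin 3) : ℕ :=
  if (i = 2 ∧ j ≠ 2) ∨ (i ≠ 2 ∧ j = 2) then 1 else 0

/-- The generator `e_{ij}` in the free algebra. -/
def gen (i j : Fin 3) : FreeAlgebra ℂ (Fin 3 × Fin 3) := FreeAlgebra.ι ℂ (i, j)

/-- Defining relations of the enveloping algebra `U(gl(2|1))`:
`e_{ij} e_{kl} - (-1)^{p(i,j)p(k,l)} e_{kl} e_{ij}
  = δ_{jk} e_{il} - (-1)^{p(i,j)p(k,l)} δ_{li} e_{kj}`. -/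
inductive Rel : FreeAlgebra ℂ (Fin 3 × Fin 3) → FreeAlgebra ℂ (Fin 3 × Fin 3) → Prop
  | mk (i j k l : Fin 3) :
      Rel (gen i j * gen k l - ((-1 : ℂ) ^ (par i j * par k l)) • (gen k l * gen i j))
        ((if j = k then gen i l else 0)
          - ((-1 : ℂ) ^ (par i j * par k l)) • (if l = i then gen k j else 0))

/-- The enveloping algebra `U = U(gl(2|1))`. -/
abbrev U : Type := RingQuot Rel

/-- The image of `e_{ij}` in `U`. -/
def e (i j : Fin 3) : U := RingQuot.mkAlgHom ℂ Rel (gen i j)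

/-- The formal power series ring `U[[t]]`. -/
abbrev V : Type := PowerSeries U

/-- The central formal variable `t`. -/
def tv : V := PowerSeries.X

/-- The inclusion `U → U[[t]]` as constant power series. -/
def C : U →+* V := PowerSeries.C (R := U)

def e₁ : U := e 0 1
def f₁ : U := e 1 0
def h₁ : U := e 0 0 - e 1 1
def e₂ : U := e 1 2
def f₂ : U := e 2 1
def h₂ : U := e 1 1 + e 2 2
def e₃ : U := e 0 2
def f₃ : U := e 2 0
def h₃ : U := h₁ + h₂

/-- `s = Σ_{n ≥ 0} C(1/2, n) t^{2n} e₁^{2n}`, so that `s² = 1 + t² e₁²`. -/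
def s : V := PowerSeries.mk fun m => if m % 2 = 0 then cHalf (m / 2) • (e₁ ^ m) else 0

def T : V := tv * C e₁ + s
def T' : V := -(tv * C e₁) + s
def H₁ : V := s * C h₁
def F₁ : V := C f₁ - ((1 : ℂ) / 4) • (tv ^ 2 * C (e₁ * (h₁ ^ 2 - 1)))
def H₂ : V := C h₂ - ((1 : ℂ) / 2) • (tv ^ 2 * C (e₁ ^ 2 * h₁))
def E₂ : V := C e₂ - ((1 : ℂ) / 4) • (tv ^ 2 * C (e₁ * e₃ * (2 * h₁ + 1)))
def F₂ : V := C f₂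
def H₃ : V := C h₃ + ((1 : ℂ) / 2) • (tv ^ 2 * C (e₁ ^ 2 * h₁))
def E₃ : V := C e₃
def F₃ : V := C f₃ + ((1 : ℂ) / 4) • (tv ^ 2 * C (e₁ * f₂ * (2 * h₁ + 1)))

/-- Commutator `[a, b] = ab - ba`. -/
def br (a b : V) : V := a * b - b * a

/-- Anticommutator `{a, b} = ab + ba`. -/
def ac (a b : V) : V := a * b + b * a


/-! ### Relations in `U` -/

lemma rel_even (i j k l : Fin 3) (hp : par i j * par k l = 0) :
    e i j * e k l - e k l * e i j =
      (if j = k then e i l else 0) - (if l = i then e k j else 0) := by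
  have h := RingQuot.mkAlgHom_rel ℂ (Rel.mk i j k l)
  rw [hp] at h
  simp only [pow_zero, one_smul] at h
  simpa [e, map_sub, map_mul, apply_ite (RingQuot.mkAlgHom ℂ Rel)] using h

lemma rel_odd (i j k l : Fin 3) (hp : par i j * par k l = 1) :
    e i j * e k l + e k l * e i j =
      (if j = k then e i l else 0) + (if l = i then e k j else 0) := by
  have h := RingQuot.mkAlgHom_rel ℂ (Rel.mk i j k l)
  rw [hp] at h
  simp only [pow_one, neg_one_smul, sub_neg_eq_add] at h
  simpa [e, map_sub, map_add, map_mul, apply_ite (RingQuot.mkAlgHom ℂ Rel)] using h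

lemma u2 : e₁ * e₂ = e₂ * e₁ + e₃ := by
  have h := rel_even 0 1 1 2 (by decide)
  simp [par] at h
  simp only [e₁, e₂, e₃]
  linear_combination (norm := noncomm_ring) h

lemma u3 : e₁ * e₃ = e₃ * e₁ := by
  have h := rel_even 0 1 0 2 (by decide)
  simp [par] at h
  simp only [e₁, e₃]
  linear_combination (norm := noncomm_ring) h

lemma u4 : e₁ * f₂ = f₂ * e₁ := by
  have h := rel_even 0 1 2 1 (by decide)
  simp [par] at h
  simp only [e₁, f₂]
  linear_combination (norm := noncomm_ring) h

lemma u5 : e₁ * f₃ + f₂ = f₃ * e₁ := by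
  have h := rel_even 0 1 2 0 (by decide)
  simp [par] at h
  simp only [e₁, f₂, f₃]
  linear_combination (norm := noncomm_ring) h

lemma u6 : f₂ * e₃ + e₃ * f₂ = e₁ := by
  have h := rel_odd 2 1 0 2 (by decide)
  simp [par] at h
  simp only [e₁, f₂, e₃]
  linear_combination (norm := noncomm_ring) h

lemma u1 : h₁ * e₁ = e₁ * h₁ + 2 * e₁ := by
  have h1 := rel_even 0 0 0 1 (by decide)
  have h2 := rel_even 1 1 0 1 (by decide)
  simp [par] at h1 h2
  have a : e 0 0 * e 0 1 = e 0 1 * e 0 0 + e 0 1 := by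
    linear_combination (norm := noncomm_ring) h1
  have b : e 1 1 * e 0 1 = e 0 1 * e 1 1 - e 0 1 := by
    linear_combination (norm := noncomm_ring) h2
  simp only [e₁, h₁, sub_mul, mul_sub]
  rw [a, b]
  noncomm_ring

/-! ### Powers of `e₁` against generators -/

lemma pgen_succ (u v : U) (hu : e₁ * u = u * e₁ + v) (hv : e₁ * v = v * e₁) :
    ∀ m : ℕ, e₁ ^ (m + 1) * u = u * e₁ ^ (m + 1) + (m + 1) • (e₁ ^ m * v)
  | 0 => by simpa using hu
  | (m + 1) => by
    have ih := pgen_succ u v hu hv m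
    have hvp : v * e₁ ^ (m + 1) = e₁ ^ (m + 1) * v :=
      ((Commute.symm (hv : Commute e₁ v)).pow_right (m + 1)).eq
    calc e₁ ^ (m + 2) * u = e₁ * (e₁ ^ (m + 1) * u) := by
          rw [← mul_assoc, ← pow_succ']
      _ = e₁ * (u * e₁ ^ (m + 1)) + (m + 1) • (e₁ * (e₁ ^ m * v)) := by
          rw [ih, mul_add, mul_smul_comm]
      _ = (u * e₁ + v) * e₁ ^ (m + 1) + (m + 1) • (e₁ ^ (m + 1) * v) := by
          rw [← mul_assoc, hu, ← mul_assoc, ← pow_succ']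
      _ = u * e₁ ^ (m + 2) + (v * e₁ ^ (m + 1) + (m + 1) • (e₁ ^ (m + 1) * v)) := by
          rw [add_mul, mul_assoc, ← pow_succ']
          abel
      _ = u * e₁ ^ (m + 2) + (m + 2) • (e₁ ^ (m + 1) * v) := by
          rw [hvp]
          conv_rhs => rw [succ_nsmul]
          abel

lemma pgen (u v : U) (hu : e₁ * u = u * e₁ + v) (hv : e₁ * v = v * e₁) (m : ℕ) :
    e₁ ^ m * u = u * e₁ ^ m + m • (e₁ ^ (m - 1) * v) := by
  cases m with
  | zero => simp
  | succ m => simpa using pgen_succ u v hu hv m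

/-! ### Scalar convolution identities -/

lemma cHalf_zero : cHalf 0 = 1 := by simp [cHalf]

lemma cHalf_succ (n : ℕ) : ((n + 1 : ℕ) : ℂ) * cHalf (n + 1) = ((1 : ℂ) / 2 - n) * cHalf n := by
  unfold cHalf
  rw [Finset.prod_range_succ, Nat.factorial_succ]
  have h1 : ((n + 1).factorial : ℂ) ≠ 0 := by exact_mod_cast (n + 1).factorial_ne_zero
  have h2 : ((n).factorial : ℂ) ≠ 0 := by exact_mod_cast (n).factorial_ne_zero
  have h3 : ((n : ℂ) + 1) ≠ 0 := by
    have h4 : ((n + 1 : ℕ) : ℂ) ≠ 0 := Nat.cast_ne_zero.mpr (Nat.succ_ne_zero n)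
    push_cast at h4
    exact h4
  push_cast
  field_simp

def Sc (n : ℕ) : ℂ := ∑ k ∈ Finset.range (n + 1), cHalf k * cHalf (n - k)

def Jc (n : ℕ) : ℂ := ∑ k ∈ Finset.range (n + 1), (k : ℂ) * (cHalf k * cHalf (n - k))

lemma J_twice (n : ℕ) : 2 * Jc n = (n : ℂ) * Sc n := by
  have h : Jc n = ∑ k ∈ Finset.range (n + 1), ((n - k : ℕ) : ℂ) * (cHalf (n - k) * cHalf k) := by
    rw [Jc, ← Finset.sum_range_reflect]
    refine Finset.sum_congr rfl fun j hj => ?_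
    have hj' : j ≤ n := by
      have := Finset.mem_range.mp hj; omega
    rw [show n + 1 - 1 - j = n - j by omega, show n - (n - j) = j by omega]
  rw [two_mul, Sc]
  nth_rewrite 1 [h]
  rw [Jc, ← Finset.sum_add_distrib, Finset.mul_sum]
  refine Finset.sum_congr rfl fun k hk => ?_
  have hk' : k ≤ n := by have := Finset.mem_range.mp hk; omega
  have : ((n - k : ℕ) : ℂ) = (n : ℂ) - k := by
    rw [Nat.cast_sub hk']
  rw [this]
  ring

lemma Sc_rec (n : ℕ) : ((n + 1 : ℕ) : ℂ) * Sc (n + 1) = (1 - (n : ℂ)) * Sc n := by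
  have hJ : Jc (n + 1) = ((1 : ℂ) / 2) * Sc n - Jc n := by
    rw [Jc, Finset.sum_range_succ']
    have h0 : ((0 : ℕ) : ℂ) * (cHalf 0 * cHalf (n + 1 - 0)) = 0 := by simp
    rw [h0, add_zero]
    have : ∀ i ∈ Finset.range (n + 1),
        ((i + 1 : ℕ) : ℂ) * (cHalf (i + 1) * cHalf (n + 1 - (i + 1))) =
          ((1 : ℂ) / 2 - i) * cHalf i * cHalf (n - i) := by
      intro i hi
      have : n + 1 - (i + 1) = n - i := by omega
      rw [this, ← mul_assoc, cHalf_succ, mul_assoc]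
    rw [Finset.sum_congr rfl this, Sc, Jc, Finset.mul_sum, ← Finset.sum_sub_distrib]
    exact Finset.sum_congr rfl fun k hk => by ring
  have h2 := J_twice (n + 1)
  have h3 := J_twice n
  push_cast at h2 h3 ⊢
  linear_combination -h2 + 2 * hJ - h3

lemma Sc_zero : Sc 0 = 1 := by simp [Sc, cHalf_zero]

lemma Sc_one : Sc 1 = 1 := by
  have h := Sc_rec 0
  simpa [Sc_zero] using h

lemma Sc_two_plus : ∀ n : ℕ, Sc (n + 2) = 0 := by
  intro n
  induction n with
  | zero =>
    have h := Sc_rec 1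
    rw [Sc_one, mul_one] at h
    have hne : ((1 + 1 : ℕ) : ℂ) ≠ 0 := Nat.cast_ne_zero.mpr (by omega)
    have h' : ((1 + 1 : ℕ) : ℂ) * Sc 2 = 0 := by rw [h]; norm_num
    exact (mul_eq_zero.mp h').resolve_left hne
  | succ m ih =>
    have h := Sc_rec (m + 2)
    have h' : ((m + 2 + 1 : ℕ) : ℂ) * Sc (m + 2 + 1) = 0 := by rw [h, ih, mul_zero]
    have hne : ((m + 2 + 1 : ℕ) : ℂ) ≠ 0 := Nat.cast_ne_zero.mpr (by omega)
    have := (mul_eq_zero.mp h').resolve_left hne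
    show Sc (m + 1 + 2) = 0
    rw [show m + 1 + 2 = m + 2 + 1 by omega]
    exact this

lemma L2 (n : ℕ) :
    ∑ k ∈ Finset.range (n + 1), ((2 * k : ℕ) : ℂ) * (cHalf k * cHalf (n - k)) =
      if n = 1 then 1 else 0 := by
  have h : ∑ k ∈ Finset.range (n + 1), ((2 * k : ℕ) : ℂ) * (cHalf k * cHalf (n - k)) = 2 * Jc n := by
    rw [Jc, Finset.mul_sum]
    refine Finset.sum_congr rfl fun k hk => ?_
    push_cast
    ring
  rw [h, J_twice]
  rcases n with _ | _ | n
  · simp [Sc_zero]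
  · simp [Sc_one]
  · rw [Sc_two_plus n]
    simp

/-! ### Parity splitting of sums -/

lemma sum_parity_even (f : ℕ → ℂ) (m : ℕ) :
    ∑ i ∈ Finset.range (2 * m + 1), f i =
      (∑ a ∈ Finset.range (m + 1), f (2 * a)) + ∑ a ∈ Finset.range m, f (2 * a + 1) := by
  induction m with
  | zero => simp
  | succ m ih =>
    rw [show 2 * (m + 1) + 1 = (2 * m + 1) + 1 + 1 by ring, Finset.sum_range_succ,
      Finset.sum_range_succ, ih, Finset.sum_range_succ (fun a => f (2 * a)) (m + 1),
      Finset.sum_range_succ (fun a => f (2 * a + 1)) m]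
    simp only [show 2 * (m + 1) = 2 * m + 1 + 1 by ring]
    ring

lemma sum_parity_odd (f : ℕ → ℂ) (m : ℕ) :
    ∑ i ∈ Finset.range (2 * m + 2), f i =
      (∑ a ∈ Finset.range (m + 1), f (2 * a)) + ∑ a ∈ Finset.range (m + 1), f (2 * a + 1) := by
  rw [show 2 * m + 2 = (2 * m + 1) + 1 by ring, Finset.sum_range_succ, sum_parity_even,
    Finset.sum_range_succ (fun a => f (2 * a + 1)) m]
  ring

/-! ### Sequences and diagonal power series -/

def sseq : ℕ → ℂ := fun m => if m % 2 = 0 then cHalf (m / 2) else 0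

def dseq : ℕ → ℂ := fun m => if m % 2 = 1 then ((m + 1 : ℕ) : ℂ) * cHalf ((m + 1) / 2) else 0

lemma sseq_even (a : ℕ) : sseq (2 * a) = cHalf a := by
  unfold sseq
  rw [if_pos (by omega), show 2 * a / 2 = a by omega]

lemma sseq_odd (a : ℕ) : sseq (2 * a + 1) = 0 := by
  unfold sseq
  rw [if_neg (by omega)]

lemma dseq_even (a : ℕ) : dseq (2 * a) = 0 := by
  unfold dseq
  rw [if_neg (by omega)]

lemma dseq_odd (a : ℕ) : dseq (2 * a + 1) = ((2 * a + 2 : ℕ) : ℂ) * cHalf (a + 1) := by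
  unfold dseq
  rw [if_pos (by omega), show 2 * a + 1 + 1 = 2 * a + 2 by omega,
    show (2 * a + 2) / 2 = a + 1 by omega]

/-- The diagonal power series with coefficients `α n • e₁ ^ n`. -/
def diag (α : ℕ → ℂ) : V := PowerSeries.mk fun m => α m • e₁ ^ m

def d : V := diag dseq

lemma coeff_diag (α : ℕ → ℂ) (n : ℕ) :
    PowerSeries.coeff n (diag α) = α n • e₁ ^ n := by
  simp [diag]

lemma s_eq : s = diag sseq := by
  ext n
  rw [coeff_diag]
  simp only [s, sseq, PowerSeries.coeff_mk]
  split_ifs <;> simp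

lemma diag_mul_diag (α β : ℕ → ℂ) :
    diag α * diag β = diag fun n => ∑ k ∈ Finset.range (n + 1), α k * β (n - k) := by
  ext n
  rw [PowerSeries.coeff_mul, Finset.Nat.sum_antidiagonal_eq_sum_range_succ_mk, coeff_diag,
    Finset.sum_smul]
  refine Finset.sum_congr rfl fun k hk => ?_
  have hk' : k ≤ n := by have := Finset.mem_range.mp hk; omega
  rw [coeff_diag, coeff_diag, smul_mul_smul_comm, ← pow_add,
    show k + (n - k) = n by omega]

lemma diag_comm (α β : ℕ → ℂ) : diag α * diag β = diag β * diag α := by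
  rw [diag_mul_diag, diag_mul_diag]
  refine congrArg diag (funext fun n => ?_)
  conv_rhs => rw [← Finset.sum_range_reflect]
  refine Finset.sum_congr rfl fun j hj => ?_
  have hj' : j ≤ n := by have := Finset.mem_range.mp hj; omega
  rw [show n + 1 - 1 - j = n - j by omega, show n - (n - j) = j by omega, mul_comm]

lemma diag_add (α β : ℕ → ℂ) : diag (fun n => α n + β n) = diag α + diag β := by
  ext n
  rw [map_add, coeff_diag, coeff_diag, coeff_diag, add_smul]

lemma diag_delta (k : ℕ) :
    diag (fun n => if n = k then 1 else 0) = tv ^ k * C (e₁ ^ k) := by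
  ext n
  rw [coeff_diag]
  simp only [tv, C]
  rw [PowerSeries.coeff_X_pow_mul', PowerSeries.coeff_C]
  by_cases h : n = k
  · subst h
    simp
  · rw [if_neg h]
    by_cases h2 : k ≤ n
    · rw [if_pos h2, if_neg (by omega), zero_smul]
    · rw [if_neg h2, zero_smul]

lemma diag_delta_zero : diag (fun n => if n = 0 then 1 else 0) = 1 := by
  have h := diag_delta 0
  simpa using h

lemma diag_mul_C (α : ℕ → ℂ) (u : U) (h : e₁ * u = u * e₁) :
    diag α * C u = C u * diag α := by
  ext n
  simp only [C]
  rw [PowerSeries.coeff_mul_C, PowerSeries.coeff_C_mul, coeff_diag, smul_mul_assoc,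
    mul_smul_comm, (Commute.pow_left (h : Commute e₁ u) n).eq]

lemma diag_mul_X (α : ℕ → ℂ) : diag α * tv = tv * diag α := PowerSeries.commute_X (diag α)

/-- Main commutator lemma: commuting a diagonal series past a generator. -/
lemma diag_comm_C (α : ℕ → ℂ) (u v : U)
    (h : ∀ m : ℕ, e₁ ^ m * u = u * e₁ ^ m + m • (e₁ ^ (m - 1) * v)) :
    diag α * C u = C u * diag α +
      tv * (diag (fun m => ((m + 1 : ℕ) : ℂ) * α (m + 1)) * C v) := by
  ext n
  simp only [C, tv, map_add]
  rw [PowerSeries.coeff_mul_C, PowerSeries.coeff_C_mul, coeff_diag]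
  cases n with
  | zero =>
    rw [PowerSeries.coeff_zero_X_mul, add_zero]
    simp [smul_mul_assoc, mul_smul_comm]
  | succ m =>
    rw [PowerSeries.coeff_succ_X_mul, PowerSeries.coeff_mul_C, coeff_diag]
    rw [smul_mul_assoc, h (m + 1), Nat.add_sub_cancel, smul_add, mul_smul_comm]
    congr 1
    rw [smul_mul_assoc, ← Nat.cast_smul_eq_nsmul ℂ (m + 1) (e₁ ^ m * v), smul_smul, mul_comm]

/-! ### Convolution evaluations -/

lemma SC1 (n : ℕ) :
    ∑ k ∈ Finset.range (n + 1), sseq k * sseq (n - k) =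
      (if n = 0 then 1 else 0) + (if n = 2 then 1 else 0) := by
  rcases Nat.even_or_odd n with ⟨m, hm⟩ | ⟨m, hm⟩
  · have hn : n = 2 * m := by omega
    subst hn
    rw [sum_parity_even (fun i => sseq i * sseq (2 * m - i)) m]
    have hodd : ∑ a ∈ Finset.range m, sseq (2 * a + 1) * sseq (2 * m - (2 * a + 1)) = 0 :=
      Finset.sum_eq_zero fun a _ => by rw [sseq_odd, zero_mul]
    have heven : ∑ a ∈ Finset.range (m + 1), sseq (2 * a) * sseq (2 * m - 2 * a) = Sc m := by
      refine Finset.sum_congr rfl fun a ha => ?_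
      have ha' : a ≤ m := by have := Finset.mem_range.mp ha; omega
      rw [sseq_even, show 2 * m - 2 * a = 2 * (m - a) by omega, sseq_even]
    rw [hodd, heven, add_zero]
    rcases m with _ | _ | m
    · simp [Sc_zero]
    · simp [Sc_one]
    · rw [Sc_two_plus m, if_neg (by omega), if_neg (by omega), add_zero]
  · have hn : n = 2 * m + 1 := by omega
    subst hn
    rw [if_neg (by omega), if_neg (by omega), add_zero]
    refine Finset.sum_eq_zero fun k hk => ?_
    have hk' : k ≤ 2 * m + 1 := by have := Finset.mem_range.mp hk; omega
    rcases Nat.even_or_odd k with ⟨b, hb⟩ | ⟨b, hb⟩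
    · have : 2 * m + 1 - k = 2 * (m - b) + 1 := by omega
      rw [this, sseq_odd, mul_zero]
    · have : k = 2 * b + 1 := by omega
      rw [this, sseq_odd, zero_mul]

lemma SC2 (n : ℕ) :
    ∑ k ∈ Finset.range (n + 1), dseq k * sseq (n - k) = if n = 1 then 1 else 0 := by
  rcases Nat.even_or_odd n with ⟨m, hm⟩ | ⟨m, hm⟩
  · have hn : n = 2 * m := by omega
    subst hn
    rw [if_neg (by omega)]
    refine Finset.sum_eq_zero fun k hk => ?_
    have hk' : k ≤ 2 * m := by have := Finset.mem_range.mp hk; omega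
    rcases Nat.even_or_odd k with ⟨b, hb⟩ | ⟨b, hb⟩
    · have : k = 2 * b := by omega
      rw [this, dseq_even, zero_mul]
    · have hk2 : k = 2 * b + 1 := by omega
      have : 2 * m - k = 2 * (m - b - 1) + 1 := by omega
      rw [this, sseq_odd, mul_zero]
  · have hn : n = 2 * m + 1 := by omega
    subst hn
    rw [show 2 * m + 1 + 1 = 2 * m + 2 by omega,
      sum_parity_odd (fun i => dseq i * sseq (2 * m + 1 - i)) m]
    have heven : ∑ a ∈ Finset.range (m + 1), dseq (2 * a) * sseq (2 * m + 1 - 2 * a) = 0 :=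
      Finset.sum_eq_zero fun a _ => by rw [dseq_even, zero_mul]
    have hodd : ∑ a ∈ Finset.range (m + 1), dseq (2 * a + 1) * sseq (2 * m + 1 - (2 * a + 1)) =
        ∑ a ∈ Finset.range (m + 1),
          ((2 * (a + 1) : ℕ) : ℂ) * (cHalf (a + 1) * cHalf (m + 1 - (a + 1))) := by
      refine Finset.sum_congr rfl fun a ha => ?_
      have ha' : a ≤ m := by have := Finset.mem_range.mp ha; omega
      rw [dseq_odd, show 2 * m + 1 - (2 * a + 1) = 2 * (m - a) by omega, sseq_even,
        show 2 * a + 2 = 2 * (a + 1) by omega, show m + 1 - (a + 1) = m - a by omega]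
      ring
    rw [heven, hodd, zero_add]
    have h := L2 (m + 1)
    rw [Finset.sum_range_succ' (fun k => ((2 * k : ℕ) : ℂ) * (cHalf k * cHalf (m + 1 - k))) (m + 1)] at h
    simp only [Nat.mul_zero, Nat.cast_zero, zero_mul, add_zero] at h
    rw [h]
    by_cases hm0 : m = 0
    · subst hm0; norm_num
    · rw [if_neg (by omega), if_neg (by omega)]

/-! ### Key power series identities -/

lemma s_mul_s : s * s = 1 + tv ^ 2 * C (e₁ ^ 2) := by
  rw [s_eq, diag_mul_diag]
  have : (fun n => ∑ k ∈ Finset.range (n + 1), sseq k * sseq (n - k)) =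
      fun n => (if n = 0 then (1 : ℂ) else 0) + (if n = 2 then 1 else 0) :=
    funext SC1
  rw [this, diag_add, diag_delta_zero, diag_delta 2]

lemma d_mul_s : d * s = tv * C e₁ := by
  rw [s_eq, d, diag_mul_diag]
  have : (fun n => ∑ k ∈ Finset.range (n + 1), dseq k * sseq (n - k)) =
      fun n => if n = 1 then (1 : ℂ) else 0 :=
    funext SC2
  rw [this, diag_delta 1, pow_one, pow_one]

lemma s_mul_d : s * d = d * s := by rw [s_eq, d]; exact diag_comm _ _

lemma seq_shift : (fun m => ((m + 1 : ℕ) : ℂ) * sseq (m + 1)) = dseq := by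
  funext m
  unfold sseq dseq
  by_cases h : m % 2 = 1
  · rw [if_pos (by omega : (m + 1) % 2 = 0), if_pos h]
  · rw [if_neg (by omega : ¬(m + 1) % 2 = 0), if_neg h, mul_zero]

lemma s_comm_C (u : U) (h : e₁ * u = u * e₁) : s * C u = C u * s := by
  rw [s_eq]; exact diag_mul_C _ _ h

lemma d_comm_C (u : U) (h : e₁ * u = u * e₁) : d * C u = C u * d := by
  rw [d]; exact diag_mul_C _ _ h

lemma s_comm_gen (u v : U) (hu : e₁ * u = u * e₁ + v) (hv : e₁ * v = v * e₁) :
    s * C u = C u * s + tv * (d * C v) := by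
  rw [s_eq, diag_comm_C sseq u v (pgen u v hu hv), seq_shift, ← d]

-- commutation facts in U
lemma hu_h₁ : e₁ * h₁ = h₁ * e₁ + -(2 * e₁) := by
  rw [u1, add_assoc, add_neg_cancel, add_zero]
lemma two_shift {R : Type*} [Ring R] (x y : R) : x * (2 * y) = 2 * (x * y) := by
  rw [two_mul, mul_add, two_mul]

lemma uMulNeg (a b : U) : a * -b = -(a * b) := mul_neg a b
lemma uNegMul (a b : U) : -a * b = -(a * b) := neg_mul a b
lemma vMulNeg (a b : V) : a * -b = -(a * b) := mul_neg a b
lemma vNegMul (a b : V) : -a * b = -(a * b) := neg_mul a b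
lemma vAddNeg (a b : V) : a + -b = a - b := (sub_eq_add_neg a b).symm

lemma hv_h₁ : e₁ * -(2 * e₁) = -(2 * e₁) * e₁ := by
  rw [uMulNeg, uNegMul, two_shift, mul_assoc]
lemma hu_f₃ : e₁ * f₃ = f₃ * e₁ + -f₂ := by
  rw [← u5, add_assoc, add_neg_cancel, add_zero]
lemma hv_f₃ : e₁ * -f₂ = -f₂ * e₁ := by
  rw [uMulNeg, uNegMul, u4]

lemma k2 : s * C e₂ = C e₂ * s + tv * (d * C e₃) := s_comm_gen e₂ e₃ u2 u3

lemma k4 : s * C h₁ + 2 * (tv * (d * C e₁)) = C h₁ * s := by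
  have h := s_comm_gen h₁ (-(2 * e₁)) hu_h₁ hv_h₁
  have hC : (C (-(2 * e₁)) : V) = -(2 * C e₁) := by
    rw [map_neg, map_mul, map_ofNat]
  rw [hC] at h
  rw [h, vMulNeg, two_shift, vMulNeg, two_shift, add_assoc, neg_add_cancel, add_zero]

lemma k6 : s * C f₃ + tv * (d * C f₂) = C f₃ * s := by
  have h := s_comm_gen f₃ (-f₂) hu_f₃ hv_f₃
  rw [map_neg] at h
  rw [h, vMulNeg, vMulNeg, add_assoc, neg_add_cancel, add_zero]

/-! ### Lifted relations and commutation in `V` -/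

lemma hX (f : V) : f * tv = tv * f := PowerSeries.commute_X f

lemma hX2 (f : V) : f * tv ^ 2 = tv ^ 2 * f := ((PowerSeries.commute_X f).pow_right 2).eq

lemma A1 : s * s = 1 + tv ^ 2 * (C e₁ * C e₁) := by
  rw [s_mul_s, sq e₁, map_mul]

lemma A4 : s * C e₁ = C e₁ * s := s_comm_C e₁ rfl
lemma A5 : s * C e₃ = C e₃ * s := s_comm_C e₃ u3
lemma A6 : s * C f₂ = C f₂ * s := s_comm_C f₂ u4
lemma A7 : d * C e₁ = C e₁ * d := d_comm_C e₁ rfl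
lemma A8 : d * C e₃ = C e₃ * d := d_comm_C e₃ u3
lemma A9 : d * C f₂ = C f₂ * d := d_comm_C f₂ u4

lemma A16 : C h₁ * C e₁ = C e₁ * C h₁ + 2 * C e₁ := by
  have := congrArg C u1
  simp only [map_mul, map_add, map_ofNat] at this
  exact this

lemma A17 : C e₁ * C e₂ = C e₂ * C e₁ + C e₃ := by
  have := congrArg C u2
  simp only [map_mul, map_add] at this
  exact this

lemma A18 : C e₁ * C e₃ = C e₃ * C e₁ := by
  have := congrArg C u3
  simp only [map_mul] at this
  exact this

lemma A19 : C e₁ * C f₂ = C f₂ * C e₁ := by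
  have := congrArg C u4
  simp only [map_mul] at this
  exact this

lemma A20 : C e₁ * C f₃ + C f₂ = C f₃ * C e₁ := by
  have := congrArg C u5
  simp only [map_mul, map_add] at this
  exact this

lemma A21 : C f₂ * C e₃ + C e₃ * C f₂ = C e₁ := by
  have := congrArg C u6
  simp only [map_mul, map_add] at this
  exact this

/-- Key lemma: `(1 + t²e₁²) d = t e₁ s`. -/
lemma KEY (w : V) :
    tv * (d * w) + tv ^ 3 * (C e₁ * (C e₁ * (d * w))) = tv ^ 2 * (C e₁ * (s * w)) := by
  linear_combination (norm := noncomm_ring)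
    -(tv * A1 * (d * w)) + tv * s * s_mul_d * w + tv * s_mul_d * (s * w) +
      tv * d_mul_s * (s * w)

/-! ### Bracket expansion helpers -/

lemma br_ex1 (a b c k : V) (r : ℂ) :
    br (a + b) (c - r • k) = br a c + br b c - r • br a k - r • br b k := by
  simp only [br, mul_sub, sub_mul, mul_add, add_mul, mul_smul_comm, smul_mul_assoc, smul_sub,
    smul_add]
  abel

lemma br_ex2 (a b c k : V) (r : ℂ) :
    br (-a + b) (c - r • k) = -br a c + br b c + r • br a k - r • br b k := by
  simp only [br, mul_sub, sub_mul, mul_add, add_mul, mul_smul_comm, smul_mul_assoc, smul_sub,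
    smul_add, vNegMul, vMulNeg, smul_neg]
  abel

lemma br_ex3 (a b c k : V) (r : ℂ) :
    br (a + b) (c + r • k) = br a c + br b c + r • br a k + r • br b k := by
  simp only [br, mul_sub, sub_mul, mul_add, add_mul, mul_smul_comm, smul_mul_assoc, smul_sub,
    smul_add]
  abel

lemma br_ex4 (a b c k : V) (r : ℂ) :
    br (-a + b) (c + r • k) = -br a c + br b c - r • br a k + r • br b k := by
  simp only [br, mul_sub, sub_mul, mul_add, add_mul, mul_smul_comm, smul_mul_assoc, smul_sub,
    smul_add, vNegMul, vMulNeg, smul_neg]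
  abel

lemma half_smul (Y : V) : ((1 : ℂ) / 2) • (2 * Y) = Y := by
  rw [show (2 : V) * Y = (2 : ℂ) • Y from by rw [Algebra.smul_def, map_ofNat], smul_smul]
  norm_num

lemma quarter_smul (Y : V) : ((1 : ℂ) / 4) • (-(4 * Y)) = -Y := by
  rw [show (4 : V) * Y = (4 : ℂ) • Y from by rw [Algebra.smul_def, map_ofNat], smul_neg,
    smul_smul]
  norm_num

lemma vSubNeg (a b : V) : a - -b = a + b := sub_neg_eq_add a b

/-! ### Micro bracket computations -/

def Pv : V := 2 * C h₁ + 1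

lemma r1 : Pv * C e₁ = C e₁ * Pv + 4 * C e₁ := by
  unfold Pv
  linear_combination (norm := noncomm_ring) 2 * A16

lemma r2 : s * Pv + 4 * (tv * (d * C e₁)) = Pv * s := by
  unfold Pv
  linear_combination (norm := noncomm_ring) 2 * k4

lemma b1 : br (tv * C e₁) (C e₂) = tv * C e₃ := by
  simp only [br]
  linear_combination (norm := noncomm_ring) tv * A17 - hX (C e₂) * C e₁

lemma b2 : br s (C e₂) = tv * (d * C e₃) := by
  simp only [br]
  linear_combination (norm := noncomm_ring) k2

lemma b1p : br (tv * C e₁) (C f₃) + tv * C f₂ = 0 := by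
  simp only [br]
  linear_combination (norm := noncomm_ring) tv * A20 - hX (C f₃) * C e₁

lemma b1' : br (tv * C e₁) (C f₃) = -(tv * C f₂) :=
  eq_neg_of_add_eq_zero_left b1p

lemma b2' : br s (C f₃) = -(tv * (d * C f₂)) := by
  simp only [br]
  rw [sub_eq_iff_eq_add, ← k6]
  abel

lemma b3gen (u : U) (h18 : C e₁ * C u = C u * C e₁) :
    br (tv * C e₁) (tv ^ 2 * (C e₁ * (C u * Pv))) =
      -(4 * (tv ^ 3 * (C e₁ * (C e₁ * C u)))) := by
  simp only [br]
  linear_combination (norm := noncomm_ring)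
    tv * hX2 (C e₁) * (C e₁ * (C u * Pv))
    - hX (tv ^ 2 * (C e₁ * (C u * Pv))) * C e₁
    - tv ^ 3 * C e₁ * C u * r1
    + tv ^ 3 * C e₁ * h18 * Pv
    + 4 * tv ^ 3 * C e₁ * h18

lemma b4gen (u : U) (h18 : C e₁ * C u = C u * C e₁) (hsu : s * C u = C u * s)
    (hdu : d * C u = C u * d) :
    br s (tv ^ 2 * (C e₁ * (C u * Pv))) =
      -(4 * (tv ^ 3 * (C e₁ * (C e₁ * (d * C u))))) := by
  simp only [br]
  linear_combination (norm := noncomm_ring [neg_neg, vMulNeg, vNegMul])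
    hX2 s * (C e₁ * (C u * Pv))
    + tv ^ 2 * A4 * (C u * Pv)
    + tv ^ 2 * C e₁ * hsu * Pv
    + tv ^ 2 * C e₁ * C u * r2
    + 4 * tv ^ 2 * C e₁ * hX (C u) * (d * C e₁)
    + 4 * tv ^ 3 * C e₁ * h18 * d
    + 4 * tv ^ 3 * C e₁ * C u * A7.symm
    + 4 * tv ^ 3 * C e₁ * C e₁ * hdu
    + 8 * tv ^ 2 * C e₁ * (hX (C u)).symm * (d * C e₁)
    + 4 * tv ^ 2 * (hX (C e₁)).symm * (C u * (d * C e₁))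

/-! ### The square of `T` and `T'` -/

lemma TSQ : T ^ 2 + 1 = 2 * (1 + tv ^ 2 * (C e₁ * C e₁) + tv * (C e₁ * s)) := by
  simp only [T]
  linear_combination (norm := noncomm_ring)
    tv * hX (C e₁) * C e₁ + hX s * C e₁ + tv * A4 + A1

lemma TSQ' : T' ^ 2 + 1 = 2 * (1 + tv ^ 2 * (C e₁ * C e₁)) - 2 * (tv * (C e₁ * s)) := by
  simp only [T']
  linear_combination (norm := noncomm_ring [vNegMul, vMulNeg, neg_neg])
    tv * hX (C e₁) * C e₁ - hX s * C e₁ - tv * A4 + A1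

/-! ### Expansions of `E₂` and `F₃` -/

lemma hE2 : E₂ = C e₂ - ((1 : ℂ) / 4) • (tv ^ 2 * (C e₁ * (C e₃ * Pv))) := by
  simp only [E₂, Pv]
  have : C (e₁ * e₃ * (2 * h₁ + 1)) = C e₁ * (C e₃ * (2 * C h₁ + 1)) := by
    simp only [map_mul, map_add, map_ofNat, map_one, mul_assoc]
  rw [this]

lemma hF3 : F₃ = C f₃ + ((1 : ℂ) / 4) • (tv ^ 2 * (C e₁ * (C f₂ * Pv))) := by
  simp only [F₃, Pv]
  have : C (e₁ * f₂ * (2 * h₁ + 1)) = C e₁ * (C f₂ * (2 * C h₁ + 1)) := by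
    simp only [map_mul, map_add, map_ofNat, map_one, mul_assoc]
  rw [this]

/-! ### The five statements -/

lemma stmt1 : br T E₂ = ((1 : ℂ) / 2) • (tv * ((T ^ 2 + 1) * E₃)) := by
  have L : br T E₂ =
      tv * C e₃ + tv ^ 3 * (C e₁ * (C e₁ * C e₃)) + tv ^ 2 * (C e₁ * (s * C e₃)) := by
    rw [show T = tv * C e₁ + s from rfl, hE2, br_ex1, b1, b2, b3gen e₃ A18, b4gen e₃ A18 A5 A8,
      quarter_smul, quarter_smul, vSubNeg, vSubNeg]
    linear_combination (norm := noncomm_ring) KEY (C e₃)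
  have R : ((1 : ℂ) / 2) • (tv * ((T ^ 2 + 1) * E₃)) =
      tv * C e₃ + tv ^ 3 * (C e₁ * (C e₁ * C e₃)) + tv ^ 2 * (C e₁ * (s * C e₃)) := by
    rw [show E₃ = C e₃ from rfl, TSQ,
      show tv * (2 * (1 + tv ^ 2 * (C e₁ * C e₁) + tv * (C e₁ * s)) * C e₃) =
        2 * (tv * ((1 + tv ^ 2 * (C e₁ * C e₁) + tv * (C e₁ * s)) * C e₃)) from by noncomm_ring,
      half_smul]
    noncomm_ring
  rw [L, R]

lemma stmt2 : br T' E₂ = -(((1 : ℂ) / 2) • (tv * ((T' ^ 2 + 1) * E₃))) := by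
  have L : br T' E₂ =
      -(tv * C e₃) - tv ^ 3 * (C e₁ * (C e₁ * C e₃)) + tv ^ 2 * (C e₁ * (s * C e₃)) := by
    rw [show T' = -(tv * C e₁) + s from rfl, hE2, br_ex2, b1, b2, b3gen e₃ A18,
      b4gen e₃ A18 A5 A8, quarter_smul, quarter_smul, vSubNeg]
    linear_combination (norm := noncomm_ring) KEY (C e₃)
  have R : ((1 : ℂ) / 2) • (tv * ((T' ^ 2 + 1) * E₃)) =
      tv * C e₃ + tv ^ 3 * (C e₁ * (C e₁ * C e₃)) - tv ^ 2 * (C e₁ * (s * C e₃)) := by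
    rw [show E₃ = C e₃ from rfl, TSQ',
      show tv * ((2 * (1 + tv ^ 2 * (C e₁ * C e₁)) - 2 * (tv * (C e₁ * s))) * C e₃) =
        2 * (tv * ((1 + tv ^ 2 * (C e₁ * C e₁) - tv * (C e₁ * s)) * C e₃)) from by
          noncomm_ring [vNegMul, vMulNeg, neg_neg],
      half_smul]
    noncomm_ring [vNegMul, vMulNeg, neg_neg]
  rw [L, R]
  noncomm_ring

lemma stmt3 : br T F₃ = -(((1 : ℂ) / 2) • (tv * ((T ^ 2 + 1) * F₂))) := by
  have L : br T F₃ =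
      -(tv * C f₂) - tv ^ 3 * (C e₁ * (C e₁ * C f₂)) - tv ^ 2 * (C e₁ * (s * C f₂)) := by
    rw [show T = tv * C e₁ + s from rfl, hF3, br_ex3, b1', b2', b3gen f₂ A19,
      b4gen f₂ A19 A6 A9, quarter_smul, quarter_smul]
    linear_combination (norm := noncomm_ring) -(KEY (C f₂))
  have R : ((1 : ℂ) / 2) • (tv * ((T ^ 2 + 1) * F₂)) =
      tv * C f₂ + tv ^ 3 * (C e₁ * (C e₁ * C f₂)) + tv ^ 2 * (C e₁ * (s * C f₂)) := by
    rw [show F₂ = C f₂ from rfl, TSQ,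
      show tv * (2 * (1 + tv ^ 2 * (C e₁ * C e₁) + tv * (C e₁ * s)) * C f₂) =
        2 * (tv * ((1 + tv ^ 2 * (C e₁ * C e₁) + tv * (C e₁ * s)) * C f₂)) from by noncomm_ring,
      half_smul]
    noncomm_ring
  rw [L, R]
  noncomm_ring

lemma stmt4 : br T' F₃ = ((1 : ℂ) / 2) • (tv * ((T' ^ 2 + 1) * F₂)) := by
  have L : br T' F₃ =
      tv * C f₂ + tv ^ 3 * (C e₁ * (C e₁ * C f₂)) - tv ^ 2 * (C e₁ * (s * C f₂)) := by
    rw [show T' = -(tv * C e₁) + s from rfl, hF3, br_ex4, b1', b2', b3gen f₂ A19,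
      b4gen f₂ A19 A6 A9, quarter_smul, quarter_smul]
    linear_combination (norm := noncomm_ring) -(KEY (C f₂))
  have R : ((1 : ℂ) / 2) • (tv * ((T' ^ 2 + 1) * F₂)) =
      tv * C f₂ + tv ^ 3 * (C e₁ * (C e₁ * C f₂)) - tv ^ 2 * (C e₁ * (s * C f₂)) := by
    rw [show F₂ = C f₂ from rfl, TSQ',
      show tv * ((2 * (1 + tv ^ 2 * (C e₁ * C e₁)) - 2 * (tv * (C e₁ * s))) * C f₂) =
        2 * (tv * ((1 + tv ^ 2 * (C e₁ * C e₁) - tv * (C e₁ * s)) * C f₂)) from by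
          noncomm_ring [vNegMul, vMulNeg, neg_neg],
      half_smul]
    noncomm_ring [vNegMul, vMulNeg, neg_neg]
  rw [L, R]

lemma stmt5 : 2 * tv * ac F₂ E₃ = T - T' := by
  simp only [ac, F₂, E₃, T, T']
  linear_combination (norm := noncomm_ring) 2 * tv * A21

/-- commutators of `T`, `T'` with `E₂`, `F₃`, and `{F₂, E₃} = (1/(2t))(T - T')`. -/
theorem statement7 :
    br T E₂ = ((1 : ℂ) / 2) • (tv * ((T ^ 2 + 1) * E₃)) ∧
    br T' E₂ = -(((1 : ℂ) / 2) • (tv * ((T' ^ 2 + 1) * E₃))) ∧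
    br T F₃ = -(((1 : ℂ) / 2) • (tv * ((T ^ 2 + 1) * F₂))) ∧
    br T' F₃ = ((1 : ℂ) / 2) • (tv * ((T' ^ 2 + 1) * F₂)) ∧
    2 * tv * ac F₂ E₃ = T - T' := by
  exact ⟨stmt1, stmt2, stmt3, stmt4, stmt5⟩

end SuperJordanian
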